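/- For 0 < p < q and any vector x ∈ R^N, the error of best s-term approximation in ℓ_q satisfies σ_s(x)_q ≤ s^{-(1/p-1/q)} ||x||_p. -/

import Mathlib

/-- The ℓp (quasi-)norm on ℝ^N: `(∑ |x ℓ|^p)^(1/p)`. -/
noncomputable def pnorm (p : ℝ) {N : ℕ} (x : Fin N → ℝ) : ℝ :=
  (∑ i, |x i| ^ p) ^ (1 / p)

/-- A vector is `s`-sparse if at most `s` of its coordinates are nonzero. -/
def IsSparse (s : ℕ) {N : ℕ} (z : Fin N → ℝ) : Prop :=
  ∃ S : Finset (Fin N), S.card ≤ s ∧ ∀ i ∉ S, z i = 0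

/-- The error of best `s`-term approximation of `x` in `ℓ_q`. -/
noncomputable def bestApprox (s : ℕ) (q : ℝ) {N : ℕ} (x : Fin N → ℝ) : ℝ :=
  sInf {r | ∃ z : Fin N → ℝ, IsSparse s z ∧ r = pnorm q (x - z)}

lemma exists_top_set (N : ℕ) (x : Fin N → ℝ) (t : ℕ) (ht : t ≤ N) :
    ∃ S : Finset (Fin N), S.card = t ∧ ∀ j ∉ S, ∀ i ∈ S, |x j| ≤ |x i| := by
  induction t with
  | zero => exact ⟨∅, rfl, by simp⟩
  | succ t ih =>
    obtain ⟨S, hcard, hmax⟩ := ih (Nat.le_of_succ_le ht)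
    have hne : Sᶜ.Nonempty := by
      rw [← Finset.card_pos, Finset.card_compl, hcard, Fintype.card_fin]
      omega
    obtain ⟨j0, hj0, hj0max⟩ := Sᶜ.exists_max_image (fun i => |x i|) hne
    have hj0S : j0 ∉ S := Finset.mem_compl.mp hj0
    refine ⟨insert j0 S, by rw [Finset.card_insert_of_notMem hj0S, hcard], ?_⟩
    intro j hj i hi
    have hjS : j ∉ S := fun h => hj (Finset.mem_insert_of_mem h)
    rcases Finset.mem_insert.mp hi with rfl | hi
    · exact hj0max j (Finset.mem_compl.mpr hjS)
    · exact hmax j hjS i hi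

/-- For `0 < p < q`, `σ_s(x)_q ≤ s^{-(1/p-1/q)} ‖x‖_p`. -/
theorem bestApprox_le {N : ℕ} (p q : ℝ) (hp : 0 < p) (hpq : p < q)
    (s : ℕ) (hs : 0 < s) (x : Fin N → ℝ) :
    bestApprox s q x ≤ (s : ℝ) ^ (-(1 / p - 1 / q)) * pnorm p x := by
  have hq : 0 < q := hp.trans hpq
  have hp' : p ≠ 0 := hp.ne'
  have hq' : q ≠ 0 := hq.ne'
  set A : ℝ := ∑ i, |x i| ^ p with hA
  have hA0 : 0 ≤ A := Finset.sum_nonneg fun i _ =>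
    Real.rpow_nonneg (abs_nonneg _) p
  -- choose the top set
  obtain ⟨S, hScard, hSmax⟩ := exists_top_set N x (min s N) (min_le_right _ _)
  set z : Fin N → ℝ := fun i => if i ∈ S then x i else 0 with hz
  have hzsp : IsSparse s z :=
    ⟨S, hScard ▸ min_le_left _ _, fun i hi => by simp [hz, hi]⟩
  -- bestApprox ≤ pnorm q (x - z)
  have h1 : bestApprox s q x ≤ pnorm q (x - z) := by
    apply csInf_le
    · refine ⟨0, fun r hr => ?_⟩
      obtain ⟨w, _, rfl⟩ := hr
      exact Real.rpow_nonneg (Finset.sum_nonneg fun i _ =>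
        Real.rpow_nonneg (abs_nonneg _) q) _
    · exact ⟨z, hzsp, rfl⟩
  refine h1.trans ?_
  -- compute pnorm q (x - z)
  have hsum : ∑ i, |(x - z) i| ^ q = ∑ i ∈ Sᶜ, |x i| ^ q := by
    rw [← Finset.sum_compl_add_sum S (fun i => |(x - z) i| ^ q)]
    have h2 : ∑ i ∈ S, |(x - z) i| ^ q = 0 := by
      apply Finset.sum_eq_zero
      intro i hi
      simp [hz, hi, Real.zero_rpow hq']
    rw [h2, add_zero]
    apply Finset.sum_congr rfl
    intro i hi
    have : i ∉ S := Finset.mem_compl.mp hi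
    simp [hz, this]
  -- key bound: for j ∉ S, |x j| ^ p ≤ A / s
  set e : ℝ := (q - p) / p with he
  have he0 : 0 ≤ e := div_nonneg (by linarith) hp.le
  have hss : (0:ℝ) < s := Nat.cast_pos.mpr hs
  have hkey : ∑ i ∈ Sᶜ, |x i| ^ q ≤ A * (A / s) ^ e := by
    by_cases hsN : s ≤ N
    · have hScard' : S.card = s := by rw [hScard]; omega
      have hjb : ∀ j ∉ S, |x j| ^ p ≤ A / s := by
        intro j hj
        rw [le_div_iff₀ hss, mul_comm]
        calc (s:ℝ) * |x j| ^ p = ∑ _i ∈ S, |x j| ^ p := by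
              rw [Finset.sum_const, hScard', nsmul_eq_mul]
          _ ≤ ∑ i ∈ S, |x i| ^ p := by
              apply Finset.sum_le_sum
              intro i hi
              exact Real.rpow_le_rpow (abs_nonneg _) (hSmax j hj i hi) hp.le
          _ ≤ A := Finset.sum_le_sum_of_subset_of_nonneg (Finset.subset_univ S)
              (fun i _ _ => Real.rpow_nonneg (abs_nonneg _) p)
      calc ∑ i ∈ Sᶜ, |x i| ^ q
          = ∑ i ∈ Sᶜ, |x i| ^ p * (|x i| ^ p) ^ e := by
            apply Finset.sum_congr rfl
            intro i _
            have hpe : p * e = q - p := by rw [he, mul_div_assoc']; exact mul_div_cancel_left₀ _ hp'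
            rw [← Real.rpow_mul (abs_nonneg _), hpe,
              ← Real.rpow_add_of_nonneg (abs_nonneg _) hp.le (by linarith : (0:ℝ) ≤ q - p)]
            ring_nf
        _ ≤ ∑ i ∈ Sᶜ, |x i| ^ p * (A / s) ^ e := by
            apply Finset.sum_le_sum
            intro i hi
            apply mul_le_mul_of_nonneg_left _ (Real.rpow_nonneg (abs_nonneg _) p)
            exact Real.rpow_le_rpow (Real.rpow_nonneg (abs_nonneg _) p)
              (hjb i (Finset.mem_compl.mp hi)) he0
        _ = (∑ i ∈ Sᶜ, |x i| ^ p) * (A / s) ^ e := by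
            rw [← Finset.sum_mul]
        _ ≤ A * (A / s) ^ e := by
            apply mul_le_mul_of_nonneg_right _
              (Real.rpow_nonneg (div_nonneg hA0 hss.le) e)
            exact Finset.sum_le_sum_of_subset_of_nonneg (Finset.subset_univ _)
              (fun i _ _ => Real.rpow_nonneg (abs_nonneg _) p)
    · have : S = Finset.univ := by
        apply Finset.eq_univ_of_card
        rw [hScard, Fintype.card_fin]; omega
      rw [this]
      simp
      positivity
  -- conclude
  have h3 : pnorm q (x - z) ≤ (A * (A / s) ^ e) ^ (1 / q) := by
    rw [pnorm, hsum]
    exact Real.rpow_le_rpow (Finset.sum_nonneg fun i _ =>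
      Real.rpow_nonneg (abs_nonneg _) q) hkey (by positivity)
  refine h3.trans_eq ?_
  rw [pnorm, ← hA]
  rcases eq_or_lt_of_le hA0 with hA0' | hA0'
  · rw [← hA0']
    have he0' : e ≠ 0 := ne_of_gt (div_pos (by linarith) hp)
    simp [Real.zero_rpow, hp', hq', he0']
  · have key : A * (A * (s:ℝ)⁻¹) ^ e = A ^ (1 + e) * (s:ℝ) ^ (-e) := by
      rw [Real.mul_rpow hA0 (by positivity), Real.rpow_add hA0', Real.rpow_one,
        Real.inv_rpow hss.le, ← Real.rpow_neg hss.le, mul_assoc]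
    rw [div_eq_mul_inv, key, Real.mul_rpow (by positivity) (by positivity),
      ← Real.rpow_mul hA0, ← Real.rpow_mul hss.le, mul_comm]
    congr 1
    · congr 1; rw [he]; field_simp
    · congr 1; rw [he]; field_simp; ring
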